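/- Fix real numbers η_1, η_2 (with η_3 = −η_1 − η_2) such that none of (η_1−η_2)/2, (η_1−η_3)/2, (η_3−η_2)/2 is a non-positive integer. Then there is a constant C such that for all complex μ = (μ_1, μ_2, μ_3) with μ_3 = −μ_1−μ_2 and Re(μ_i) = η_i, |G*_b(μ)| ≤ C · M_poly( (Re(μ_1−μ_2)−1)/2 , (Re(μ_1−μ_3)−1)/2 , (Re(μ_3−μ_2)−1)/2 ; μ ) / Λ_poly(μ). -/

import Mathlib

open MeasureTheory

/-- `M_poly(a,b,c;μ) = |1+i Im(μ₁−μ₂)|^a |1+i Im(μ₁−μ₃)|^b |1+i Im(μ₂−μ₃)|^c`. -/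
noncomputable def Mpoly (a b c : ℝ) (μ₁ μ₂ μ₃ : ℂ) : ℝ :=
  ‖1 + Complex.I * (((μ₁ - μ₂).im : ℝ) : ℂ)‖ ^ a *
    ‖1 + Complex.I * (((μ₁ - μ₃).im : ℝ) : ℂ)‖ ^ b *
    ‖1 + Complex.I * (((μ₂ - μ₃).im : ℝ) : ℂ)‖ ^ c

/-- `Λ_poly(μ) = M_poly(Re(μ₁−μ₂)/2, Re(μ₁−μ₃)/2, Re(μ₂−μ₃)/2; μ)`. -/
noncomputable def Lpoly (μ₁ μ₂ μ₃ : ℂ) : ℝ :=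
  Mpoly ((μ₁ - μ₂).re / 2) ((μ₁ - μ₃).re / 2) ((μ₂ - μ₃).re / 2) μ₁ μ₂ μ₃

/-- The double residue `G*_b(μ)` of `G*(u,μ)`. -/
noncomputable def Gb (μ₁ μ₂ μ₃ : ℂ) : ℂ :=
  4 * (Real.pi : ℂ) ^ ((3 : ℂ) / 2 + μ₁ - μ₃) *
      Complex.Gamma ((μ₁ - μ₂) / 2) * Complex.Gamma ((μ₁ - μ₃) / 2) *
      Complex.Gamma ((μ₃ - μ₂) / 2) /
    (Complex.Gamma ((1 + μ₁ - μ₂) / 2) * Complex.Gamma ((1 + μ₁ - μ₃) / 2) *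
      Complex.Gamma ((1 + μ₂ - μ₃) / 2))


open Real Filter Finset Topology

section statement12aux

/-! ### Auxiliary lemmas: Stirling-type bounds for `Γ` on vertical lines. -/

noncomputable def gg (t y : ℝ) : ℝ := Real.log (y^2 + t^2) - 2 * Real.log y
noncomputable def AA (t y : ℝ) : ℝ := y * gg t y + 2 * t * Real.arctan (y / t)

lemma gg_nonneg {t y : ℝ} (hy : 0 < y) : 0 ≤ gg t y := by
  have h1 : (2:ℝ) * Real.log y = Real.log (y^2) := by
    rw [show (y:ℝ)^2 = y*y by ring, Real.log_mul hy.ne' hy.ne']; ring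
  have h2 : Real.log (y^2) ≤ Real.log (y^2 + t^2) :=
    Real.log_le_log (by positivity) (by nlinarith [sq_nonneg t])
  simp only [gg]; linarith

lemma hasDerivAt_gg (t : ℝ) {y : ℝ} (hy : 0 < y) :
    HasDerivAt (gg t) (-2 * t^2 / (y^3 + t^2 * y)) y := by
  have h0 : y^2 + t^2 ≠ 0 := by positivity
  have h1 : HasDerivAt (fun y : ℝ => Real.log (y^2 + t^2)) (2*y / (y^2 + t^2)) y := by
    have : HasDerivAt (fun y : ℝ => y^2 + t^2) (2*y) y := by
      simpa using ((hasDerivAt_pow 2 y).add_const (t^2))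
    simpa [Function.comp_def, div_eq_inv_mul] using (Real.hasDerivAt_log h0).comp y this
  have h2 : HasDerivAt (fun y : ℝ => 2 * Real.log y) (2 / y) y := by
    simpa [mul_comm, div_eq_mul_inv] using (Real.hasDerivAt_log hy.ne').const_mul 2
  have := h1.sub h2
  exact this.congr_deriv (by field_simp; ring)

lemma hasDerivAt_AA (t : ℝ) (ht : 0 < t) {y : ℝ} (hy : 0 < y) :
    HasDerivAt (AA t) (gg t y) y := by
  have h0 : y^2 + t^2 ≠ 0 := by positivity
  have hg : HasDerivAt (gg t) (-2 * t^2 / (y^3 + t^2 * y)) y := hasDerivAt_gg t hy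
  have h1 : HasDerivAt (fun y : ℝ => y * gg t y)
      (1 * gg t y + y * (-2 * t^2 / (y^3 + t^2 * y))) y :=
    (hasDerivAt_id y).mul hg
  have h2 : HasDerivAt (fun y : ℝ => 2 * t * Real.arctan (y / t))
      (2 * t * ((1 / (1 + (y/t)^2)) * (1/t))) y := by
    have hd : HasDerivAt (fun y : ℝ => y / t) (1/t) y := by
      simpa using (hasDerivAt_id y).div_const t
    exact ((Real.hasDerivAt_arctan (y/t)).comp y hd).const_mul (2*t)
  have := h1.add h2
  have hyy : y^3 + t^2 * y ≠ 0 := by positivity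
  exact this.congr_deriv (by field_simp; ring)

lemma gg_deriv_mono (t : ℝ) {y₁ y₂ : ℝ} (h1 : 0 < y₁) (h12 : y₁ ≤ y₂) :
    -2 * t^2 / (y₁^3 + t^2 * y₁) ≤ -2 * t^2 / (y₂^3 + t^2 * y₂) := by
  have h2 : 0 < y₂ := lt_of_lt_of_le h1 h12
  have d1 : 0 < y₁^3 + t^2 * y₁ := by positivity
  have d2 : 0 < y₂^3 + t^2 * y₂ := by positivity
  rw [div_le_div_iff₀ d1 d2]
  have hcube : y₁^3 ≤ y₂^3 := pow_le_pow_left₀ h1.le h12 3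
  nlinarith [mul_nonneg (sq_nonneg t) (sub_nonneg.2 hcube),
    mul_nonneg (sq_nonneg t) (mul_nonneg (sq_nonneg t) (sub_nonneg.2 h12))]

/-- Trapezoid estimate: `A b - A a ≤ (b-a)(g a + g b)/2` for convex decreasing `g`. -/
lemma trapezoid (t : ℝ) (ht : 0 < t) {a b : ℝ} (ha : 0 < a) (hab : a ≤ b) :
    AA t b - AA t a ≤ (b - a) * (gg t a + gg t b) / 2 := by
  rcases eq_or_lt_of_le hab with rfl | hlt
  · simp
  set φ : ℝ → ℝ := fun x => AA t x - AA t a - (x - a) * (gg t a + gg t x) / 2 with hφ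
  have hmem : ∀ x ∈ Set.Icc a b, 0 < x := fun x hx => lt_of_lt_of_le ha hx.1
  have hφd : ∀ x ∈ Set.Icc a b, HasDerivAt φ
      ((gg t x - gg t a - (x - a) * (-2 * t^2 / (x^3 + t^2 * x))) / 2) x := by
    intro x hx
    have hxpos := hmem x hx
    have h1 := hasDerivAt_AA t ht hxpos
    have h2 : HasDerivAt (fun x : ℝ => (x - a) * (gg t a + gg t x) / 2)
        ((1 * (gg t a + gg t x) + (x - a) * (-2 * t^2 / (x^3 + t^2 * x))) / 2) x := by
      exact (((hasDerivAt_id x).sub_const a).mul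
        ((hasDerivAt_gg t hxpos).const_add (gg t a))).div_const 2
    have := (h1.sub_const (AA t a)).sub h2
    exact this.congr_deriv (by ring)
  have hd0 : ∀ x ∈ interior (Set.Icc a b), deriv φ x ≤ 0 := by
    rw [interior_Icc]
    intro x hx
    have hxpos : 0 < x := lt_of_lt_of_le ha hx.1.le
    rw [(hφd x (Set.mem_Icc.2 ⟨hx.1.le, hx.2.le⟩)).deriv]
    have hax : a < x := hx.1
    -- MVT: gg t x - gg t a = (x - a) * gg' c ≤ (x - a) * gg' x
    obtain ⟨c, hc, hceq⟩ := exists_hasDerivAt_eq_slope (gg t)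
      (fun y => -2 * t^2 / (y^3 + t^2 * y)) hax
      (fun y hy => ((hasDerivAt_gg t (lt_of_lt_of_le ha hy.1)).continuousAt).continuousWithinAt)
      (fun y hy => hasDerivAt_gg t (lt_of_lt_of_le ha hy.1.le))
    have hxa : x - a ≠ 0 := ne_of_gt (by linarith)
    have hceq' := (div_eq_iff hxa).mp hceq.symm
    have hslope : gg t x - gg t a = (x - a) * (-2 * t^2 / (c^3 + t^2 * c)) := by
      linear_combination hceq'
    have hmono := gg_deriv_mono t (lt_of_lt_of_le ha hc.1.le) hc.2.le
    have : gg t x - gg t a ≤ (x - a) * (-2 * t^2 / (x^3 + t^2 * x)) := by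
      rw [hslope]
      exact mul_le_mul_of_nonneg_left hmono (by linarith)
    linarith
  have hanti : AntitoneOn φ (Set.Icc a b) := by
    apply antitoneOn_of_deriv_nonpos (convex_Icc a b)
    · exact fun x hx => ((hφd x hx).continuousAt).continuousWithinAt
    · rw [interior_Icc]
      exact fun x hx => ((hφd x (Set.mem_Icc.2 ⟨hx.1.le, hx.2.le⟩)).differentiableAt).differentiableWithinAt
    · exact hd0
  have := hanti (Set.left_mem_Icc.2 hab) (Set.right_mem_Icc.2 hab) hab
  simp only [hφ] at this
  simp at this
  linarith

lemma sum_ge (t σ : ℝ) (ht : 0 < t) (hσ : 0 < σ) (n : ℕ) :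
    AA t (σ + n) - AA t σ + gg t σ / 2 + gg t (σ + n) / 2 ≤
      ∑ j ∈ Finset.range (n + 1), gg t (σ + j) := by
  induction n with
  | zero => simp
  | succ n ih =>
    rw [Finset.sum_range_succ]
    have htr := trapezoid t ht (show (0:ℝ) < σ + n by positivity)
      (show (σ + (n:ℝ)) ≤ σ + (n+1:ℕ) by push_cast; linarith)
    push_cast at htr ⊢
    have hg := gg_nonneg (t := t) (show (0:ℝ) < σ + (n+1) by positivity)
    nlinarith [htr, ih, hg]

lemma abs_shift (σ t : ℝ) (hσ : 0 < σ) (j : ℕ) :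
    ‖(σ + t * Complex.I) + j‖ = (σ + j) * Real.exp (gg t (σ + j) / 2) := by
  have hy : (0:ℝ) < σ + j := by positivity
  have hX : (0:ℝ) < (σ+j)^2 + t^2 := by positivity
  have h1 : (σ + t * Complex.I) + j = ((σ + j : ℝ) : ℂ) + (t : ℝ) * Complex.I := by
    push_cast; ring
  rw [h1, Complex.norm_add_mul_I]
  have : Real.exp (gg t (σ + j) / 2) = Real.sqrt ((σ+j)^2 + t^2) / (σ + j) := by
    rw [gg, Real.sqrt_eq_rpow, Real.rpow_def_of_pos hX]
    rw [show (Real.log ((σ+j)^2 + t^2) - 2 * Real.log (σ+j)) / 2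
        = Real.log ((σ+j)^2 + t^2) * (1/2) + (- Real.log (σ+j)) by ring,
      Real.exp_add, Real.exp_neg, Real.exp_log hy]
    ring
  rw [this]
  field_simp

lemma absGammaSeq_eq (σ t : ℝ) (hσ : 0 < σ) (n : ℕ) (hn : 1 ≤ n) :
    ‖Complex.GammaSeq (σ + t * Complex.I) n‖
      = ‖Complex.GammaSeq (σ : ℂ) n‖ *
          Real.exp (-(∑ j ∈ Finset.range (n+1), gg t (σ + j)) / 2) := by
  have hnR : (0:ℝ) < n := by exact_mod_cast hn
  rw [Complex.GammaSeq, Complex.GammaSeq]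
  rw [norm_div, norm_div, norm_mul, norm_mul]
  have hb1 : ‖(n:ℂ) ^ (σ + t * Complex.I)‖ = (n:ℝ) ^ (σ:ℝ) := by
    rw [show ((n:ℂ)) = (((n:ℝ)):ℂ) by push_cast; rfl,
      Complex.norm_cpow_eq_rpow_re_of_pos hnR]
    norm_num
  have hb2 : ‖(n:ℂ) ^ (σ:ℂ)‖ = (n:ℝ) ^ (σ:ℝ) := by
    rw [show ((n:ℂ)) = (((n:ℝ)):ℂ) by push_cast; rfl,
      Complex.norm_cpow_eq_rpow_re_of_pos hnR]
    norm_num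
  rw [hb1, hb2, norm_prod, norm_prod]
  have hP : ∀ j ∈ Finset.range (n+1), ‖(σ:ℂ) + (j:ℕ)‖ = σ + (j:ℕ) := by
    intro j _
    rw [show ((σ:ℂ) + (j:ℕ)) = (((σ + j : ℝ)):ℂ) by push_cast; rfl, Complex.norm_real, Real.norm_eq_abs]
    have : (0:ℝ) < σ + j := by positivity
    exact abs_of_pos this
  rw [Finset.prod_congr rfl hP,
    Finset.prod_congr rfl (fun j _ => abs_shift σ t hσ j), Finset.prod_mul_distrib,
    ← Real.exp_sum, ← Finset.sum_div, neg_div, Real.exp_neg]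
  have hprodpos : (0:ℝ) < ∏ j ∈ Finset.range (n+1), (σ + (j:ℕ)) := by
    apply Finset.prod_pos; intro j _; positivity
  have hexp : Real.exp ((∑ j ∈ Finset.range (n+1), gg t (σ + j)) / 2) ≠ 0 := Real.exp_ne_zero _
  field_simp

lemma gg_le (t : ℝ) {y : ℝ} (hy : 0 < y) : gg t y ≤ t^2 / y^2 := by
  have h2 : (0:ℝ) < y^2 := by positivity
  have h1 : gg t y = Real.log ((y^2 + t^2)/y^2) := by
    rw [gg, Real.log_div (by positivity) (ne_of_gt h2)]
    rw [show (2:ℝ) * Real.log y = Real.log (y^2) by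
      rw [show (y:ℝ)^2 = y*y by ring, Real.log_mul hy.ne' hy.ne']; ring]
  rw [h1]
  have := Real.log_le_sub_one_of_pos (show (0:ℝ) < (y^2+t^2)/y^2 by positivity)
  have heq : (y^2 + t^2)/y^2 - 1 = t^2/y^2 := by field_simp; ring
  linarith [this, heq.le]

lemma tendsto_AA (t σ : ℝ) (ht : 0 < t) (hσ : 0 < σ) :
    Tendsto (fun n : ℕ => AA t (σ + n)) atTop (𝓝 (π * t)) := by
  have hA : Tendsto (fun n : ℕ => σ + (n:ℝ)) atTop atTop :=
    tendsto_atTop_add_const_left atTop σ tendsto_natCast_atTop_atTop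
  have h1 : Tendsto (fun n : ℕ => (σ + n) * gg t (σ + n)) atTop (𝓝 0) := by
    have hub : Tendsto (fun n : ℕ => t^2 / (σ + n)) atTop (𝓝 0) :=
      Tendsto.div_atTop tendsto_const_nhds hA
    refine tendsto_of_tendsto_of_tendsto_of_le_of_le tendsto_const_nhds hub ?_ ?_
    · intro n
      have hyn : (0:ℝ) < σ + n := by positivity
      exact mul_nonneg hyn.le (gg_nonneg hyn)
    · intro n
      have hyn : (0:ℝ) < σ + n := by positivity
      have := gg_le t hyn
      calc (σ + n) * gg t (σ + n) ≤ (σ + n) * (t^2/(σ+n)^2) :=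
            mul_le_mul_of_nonneg_left this hyn.le
        _ = t^2 / (σ + n) := by field_simp
  have h2 : Tendsto (fun n : ℕ => 2 * t * Real.arctan ((σ + n)/t)) atTop (𝓝 (2 * t * (π/2))) := by
    have hdiv : Tendsto (fun n : ℕ => (σ + (n:ℝ))/t) atTop atTop := hA.atTop_div_const ht
    exact ((Real.tendsto_arctan_atTop.mono_right nhdsWithin_le_nhds).comp hdiv).const_mul (2*t)
  have := h1.add h2
  simp only [zero_add] at this
  convert this using 2
  · rfl
  ring

lemma core (σ : ℝ) (hσ : 0 < σ) {t : ℝ} (ht : 1 ≤ t) :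
    ‖Complex.Gamma (σ + t * Complex.I)‖ ≤
      Real.Gamma σ * Real.exp ((AA t σ - gg t σ / 2 - π * t) / 2) := by
  have htpos : 0 < t := lt_of_lt_of_le one_pos ht
  set z : ℂ := σ + t * Complex.I with hz
  have h1 : Tendsto (fun n => ‖Complex.GammaSeq z n‖) atTop
      (𝓝 (‖Complex.Gamma z‖)) :=
    (continuous_norm.tendsto _).comp (Complex.GammaSeq_tendsto_Gamma z)
  have h2 : Tendsto (fun n : ℕ => ‖Complex.GammaSeq (σ:ℂ) n‖ *
      Real.exp ((AA t σ - gg t σ / 2 - AA t (σ + n)) / 2)) atTop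
      (𝓝 (Real.Gamma σ * Real.exp ((AA t σ - gg t σ / 2 - π * t) / 2))) := by
    have ha : Tendsto (fun n => ‖Complex.GammaSeq (σ:ℂ) n‖) atTop
        (𝓝 (Real.Gamma σ)) := by
      have := (continuous_norm.tendsto _).comp (Complex.GammaSeq_tendsto_Gamma (σ:ℂ))
      have heq : ‖Complex.Gamma (σ:ℂ)‖ = Real.Gamma σ := by
        rw [Complex.Gamma_ofReal, Complex.norm_real, Real.norm_eq_abs,
          abs_of_pos (Real.Gamma_pos_of_pos hσ)]
      rwa [heq] at this
    have hb : Tendsto (fun n : ℕ => Real.exp ((AA t σ - gg t σ / 2 - AA t (σ + n)) / 2)) atTop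
        (𝓝 (Real.exp ((AA t σ - gg t σ / 2 - π * t) / 2))) := by
      apply (Real.continuous_exp.tendsto _).comp
      exact (((tendsto_AA t σ htpos hσ).const_sub _).div_const 2)
    exact ha.mul hb
  refine le_of_tendsto_of_tendsto h1 h2 ?_
  filter_upwards [eventually_ge_atTop 1] with n hn
  rw [absGammaSeq_eq σ t hσ n hn]
  apply mul_le_mul_of_nonneg_left _ (norm_nonneg _)
  apply Real.exp_le_exp.2
  have hs := sum_ge t σ htpos hσ n
  have hgn : 0 ≤ gg t (σ + n) := gg_nonneg (by positivity)
  linarith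

lemma rpow_comp {x y K : ℝ} (hx : 0 < x) (hy : 0 < y) (h1 : x ≤ K * y) (h2 : y ≤ K * x)
    (e : ℝ) : x ^ e ≤ K ^ |e| * y ^ e := by
  have hK : 0 < K := by
    by_contra h
    push_neg at h
    nlinarith
  rcases le_or_gt 0 e with he | he
  · rw [abs_of_nonneg he]
    calc x ^ e ≤ (K * y) ^ e := Real.rpow_le_rpow hx.le h1 he
      _ = K ^ e * y ^ e := Real.mul_rpow hK.le hy.le
  · rw [abs_of_neg he]
    have hxy : y / K ≤ x := (div_le_iff₀' hK).2 h2
    calc x ^ e ≤ (y / K) ^ e :=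
          Real.rpow_le_rpow_of_nonpos (by positivity) hxy he.le
      _ = K ^ (-e) * y ^ e := by
          rw [Real.div_rpow hy.le hK.le, Real.rpow_neg hK.le, div_eq_mul_inv, mul_comm]

lemma arctan_le_self {x : ℝ} (hx : 0 ≤ x) : Real.arctan x ≤ x := by
  rcases eq_or_lt_of_le hx with rfl | hx'
  · simp
  have hpos : 0 < Real.arctan x := by
    rw [← Real.arctan_zero]
    exact Real.arctan_strictMono hx'
  have h1 : Real.arctan x < Real.tan (Real.arctan x) :=
    Real.lt_tan hpos (Real.arctan_lt_pi_div_two x)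
  rw [Real.tan_arctan] at h1
  exact h1.le

lemma core2 (σ : ℝ) (hσ : 0 < σ) :
    ∃ C, 0 < C ∧ ∀ t : ℝ, 1 ≤ t →
      ‖Complex.Gamma (σ + t * Complex.I)‖ ≤
        C * (1 + t) ^ (σ - 1/2) * Real.exp (-(π/2) * t) := by
  set K : ℝ := 1 + 1/σ^2 + 4*σ^2 with hK
  have hKpos : 0 < K := by positivity
  refine ⟨Real.Gamma σ * Real.exp σ * K ^ |σ/2 - 1/4|,
    by positivity, fun t ht => ?_⟩
  have htpos : 0 < t := lt_of_lt_of_le one_pos ht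
  have hbase : (0:ℝ) < (σ^2 + t^2)/σ^2 := by positivity
  have hXpos : (0:ℝ) < σ^2 + t^2 := by positivity
  -- exp decomposition
  have hgg : gg t σ = Real.log ((σ^2 + t^2)/σ^2) := by
    rw [gg, Real.log_div hXpos.ne' (by positivity)]
    rw [show (2:ℝ) * Real.log σ = Real.log (σ^2) by
      rw [show (σ:ℝ)^2 = σ*σ by ring, Real.log_mul hσ.ne' hσ.ne']; ring]
  have hsplit : Real.exp ((AA t σ - gg t σ / 2 - π * t) / 2)
      = ((σ^2 + t^2)/σ^2) ^ (σ/2 - 1/4) * Real.exp (t * Real.arctan (σ/t)) *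
          Real.exp (-(π/2) * t) := by
    rw [AA, hgg]
    rw [Real.rpow_def_of_pos hbase, ← Real.exp_add, ← Real.exp_add]
    congr 1
    ring
  have harc : Real.exp (t * Real.arctan (σ/t)) ≤ Real.exp σ := by
    apply Real.exp_le_exp.2
    have := arctan_le_self (show (0:ℝ) ≤ σ/t by positivity)
    calc t * Real.arctan (σ/t) ≤ t * (σ/t) := mul_le_mul_of_nonneg_left this htpos.le
      _ = σ := by field_simp
  have hcomp : ((σ^2 + t^2)/σ^2) ^ (σ/2 - 1/4) ≤ K ^ |σ/2 - 1/4| * (1+t) ^ (σ - 1/2) := by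
    have h1 : (σ^2 + t^2)/σ^2 ≤ K * (1+t)^2 := by
      rw [div_le_iff₀ (by positivity : (0:ℝ) < σ^2)]
      have hK1 : K * (1+t)^2 * σ^2 = (σ^2 + 1 + 4*σ^4) * (1+t)^2 := by
        rw [hK]; field_simp
      rw [hK1]
      nlinarith [sq_nonneg t, sq_nonneg (σ^2), htpos.le]
    have h2 : (1+t)^2 ≤ K * ((σ^2 + t^2)/σ^2) := by
      rw [hK]
      have : (1 + 1/σ^2 + 4*σ^2) * ((σ^2 + t^2)/σ^2) ≥ 4*σ^2 * ((σ^2+t^2)/σ^2) := by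
        apply mul_le_mul_of_nonneg_right _ (le_of_lt hbase)
        have hinv : (0:ℝ) ≤ 1/σ^2 := by positivity
        linarith
      have h4 : 4*σ^2 * ((σ^2+t^2)/σ^2) = 4*(σ^2+t^2) := by field_simp
      nlinarith [this, h4, ht]
    have := rpow_comp hbase (show (0:ℝ) < (1+t)^2 by positivity) h1 h2 (σ/2 - 1/4)
    calc ((σ^2 + t^2)/σ^2) ^ (σ/2 - 1/4)
        ≤ K ^ |σ/2 - 1/4| * ((1+t)^2) ^ (σ/2 - 1/4) := this
      _ = K ^ |σ/2 - 1/4| * (1+t) ^ (σ - 1/2) := by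
          rw [← Real.rpow_natCast (1+t) 2, ← Real.rpow_mul (by positivity),
            show ((2:ℕ):ℝ) * (σ/2 - 1/4) = σ - 1/2 by push_cast; ring]
  calc ‖Complex.Gamma (σ + t * Complex.I)‖
      ≤ Real.Gamma σ * Real.exp ((AA t σ - gg t σ / 2 - π * t) / 2) := core σ hσ ht
    _ = Real.Gamma σ * (((σ^2 + t^2)/σ^2) ^ (σ/2 - 1/4) * Real.exp (t * Real.arctan (σ/t)))
          * Real.exp (-(π/2) * t) := by rw [hsplit]; ring
    _ ≤ Real.Gamma σ * ((K ^ |σ/2 - 1/4| * (1+t) ^ (σ - 1/2)) * Real.exp σ)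
          * Real.exp (-(π/2) * t) := by
        apply mul_le_mul_of_nonneg_right _ (Real.exp_nonneg _)
        apply mul_le_mul_of_nonneg_left _ (Real.Gamma_pos_of_pos hσ).le
        exact mul_le_mul hcomp harc (Real.exp_nonneg _) (by positivity)
    _ = Real.Gamma σ * Real.exp σ * K ^ |σ/2 - 1/4| * (1+t) ^ (σ - 1/2)
          * Real.exp (-(π/2) * t) := by ring

lemma Gamma_shift (z : ℂ) (hz : z.im ≠ 0) (m : ℕ) :
    Complex.Gamma (z + m) = (∏ k ∈ Finset.range m, (z + k)) * Complex.Gamma z := by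
  induction m with
  | zero => simp
  | succ m ih =>
    have hne : z + m ≠ 0 := by
      intro h
      have : (z + (m:ℂ)).im = 0 := by rw [h]; simp
      simp at this
      exact hz this
    have : z + (m+1 : ℕ) = (z + m) + 1 := by push_cast; ring
    rw [this, Complex.Gamma_add_one _ hne, ih, Finset.prod_range_succ]
    ring

/-- Upper bound for `|Γ|` on vertical lines, away from the real axis. -/
lemma gammaU1 (σ : ℝ) :
    ∃ C, 0 < C ∧ ∀ z : ℂ, z.re = σ → 1 ≤ |z.im| →
      ‖Complex.Gamma z‖ ≤
        C * (1 + |z.im|) ^ (σ - 1/2) * Real.exp (-(π/2) * |z.im|) := by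
  obtain ⟨m, hm⟩ := exists_nat_gt (-σ)
  have hσm : 0 < σ + m := by linarith
  obtain ⟨C₀, hC₀, hbound⟩ := core2 (σ + m) hσm
  refine ⟨C₀ * 2 ^ m, by positivity, ?_⟩
  have main : ∀ z : ℂ, z.re = σ → 1 ≤ z.im →
      ‖Complex.Gamma z‖ ≤
        C₀ * 2 ^ m * (1 + z.im) ^ (σ - 1/2) * Real.exp (-(π/2) * z.im) := by
    intro z hre him
    set t := z.im with htdef
    have htpos : 0 < t := lt_of_lt_of_le one_pos him
    have hzim : z.im ≠ 0 := ne_of_gt htpos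
    -- shift
    have hsh := Gamma_shift z hzim m
    have habs : ‖Complex.Gamma (z + m)‖ =
        (∏ k ∈ Finset.range m, ‖z + k‖) * ‖Complex.Gamma z‖ := by
      rw [hsh, norm_mul, norm_prod]
    have hprod_ge : (t : ℝ) ^ m ≤ ∏ k ∈ Finset.range m, ‖z + k‖ := by
      calc (t:ℝ)^m = ∏ _k ∈ Finset.range m, t := by rw [Finset.prod_const, Finset.card_range]
        _ ≤ ∏ k ∈ Finset.range m, ‖z + k‖ := by
            apply Finset.prod_le_prod (fun k _ => htpos.le)
            intro k _
            calc t = |(z + k).im| := by simp; exact (abs_of_pos htpos).symm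
              _ ≤ ‖z + k‖ := Complex.abs_im_le_norm _
    have hprodpos : (0:ℝ) < ∏ k ∈ Finset.range m, ‖z + k‖ :=
      lt_of_lt_of_le (by positivity) hprod_ge
    -- bound at z + m
    have hzm : z + m = ((σ + m : ℝ) : ℂ) + (t : ℝ) * Complex.I := by
      apply Complex.ext <;> simp [hre, htdef]
    have hup : ‖Complex.Gamma (z + m)‖ ≤
        C₀ * (1 + t) ^ ((σ + m) - 1/2) * Real.exp (-(π/2) * t) := by
      rw [hzm]; exact hbound t him
    have habsΓ : ‖Complex.Gamma z‖ =
        ‖Complex.Gamma (z + m)‖ / (∏ k ∈ Finset.range m, ‖z + k‖) := by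
      rw [habs]; field_simp
    rw [habsΓ]
    have step1 : ‖Complex.Gamma (z + m)‖ / (∏ k ∈ Finset.range m, ‖z + k‖)
        ≤ ‖Complex.Gamma (z + m)‖ / t ^ m :=
      div_le_div_of_nonneg_left (norm_nonneg _) (by positivity) hprod_ge
    refine le_trans step1 ?_
    rw [div_le_iff₀ (by positivity : (0:ℝ) < t ^ m)]
    refine le_trans hup ?_
    have hkey : (1 + t) ^ ((σ + m) - 1/2) = (1 + t) ^ (σ - 1/2) * (1 + t) ^ (m : ℝ) := by
      rw [← Real.rpow_add (by positivity)]
      congr 1; ring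
    have h2t : (1 + t) ^ (m:ℝ) ≤ 2 ^ (m:ℝ) * t ^ (m:ℝ) := by
      calc (1 + t) ^ (m:ℝ) ≤ (2*t) ^ (m:ℝ) :=
            Real.rpow_le_rpow (by positivity) (by linarith) (by positivity)
        _ = 2 ^ (m:ℝ) * t ^ (m:ℝ) := Real.mul_rpow (by norm_num) htpos.le
    calc C₀ * (1 + t) ^ ((σ + m) - 1/2) * Real.exp (-(π/2) * t)
        = C₀ * ((1 + t) ^ (σ - 1/2) * (1 + t) ^ (m:ℝ)) * Real.exp (-(π/2) * t) := by
          rw [hkey]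
      _ ≤ C₀ * ((1 + t) ^ (σ - 1/2) * (2 ^ (m:ℝ) * t ^ (m:ℝ))) * Real.exp (-(π/2) * t) := by
          apply mul_le_mul_of_nonneg_right _ (Real.exp_nonneg _)
          apply mul_le_mul_of_nonneg_left _ hC₀.le
          exact mul_le_mul_of_nonneg_left h2t (by positivity)
      _ = C₀ * 2 ^ m * (1 + t) ^ (σ - 1/2) * Real.exp (-(π/2) * t) * t ^ m := by
          rw [Real.rpow_natCast, Real.rpow_natCast]
          ring
  intro z hre him
  rcases le_or_gt 1 z.im with h | h
  · have := main z hre h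
    rwa [abs_of_pos (lt_of_lt_of_le one_pos h)]
  · have hneg : z.im ≤ -1 := by
      rcases abs_cases z.im with ⟨h1, _⟩ | ⟨h1, _⟩
      · linarith [him, h]
      · linarith [him]
    set w := (starRingEnd ℂ) z with hw
    have hwre : w.re = σ := by simp [hw, hre]
    have hwim : 1 ≤ w.im := by simp [hw]; linarith
    have := main w hwre hwim
    have habs : ‖Complex.Gamma z‖ = ‖Complex.Gamma w‖ := by
      rw [hw, Complex.Gamma_conj, Complex.norm_conj]
    have him_eq : |z.im| = w.im := by
      rw [abs_of_nonpos (by linarith : z.im ≤ 0)]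
      simp [hw]
    rw [habs, him_eq]
    exact this

lemma poly_lower (e : ℝ) {τ : ℝ} (hτ : |τ| ≤ 1) :
    min 1 (2 ^ e) ≤ (1 + |τ|) ^ e := by
  have h0 : (0:ℝ) ≤ |τ| := abs_nonneg τ
  rcases le_or_gt 0 e with he | he
  · refine le_trans (min_le_left _ _) ?_
    calc (1:ℝ) = 1 ^ e := (Real.one_rpow e).symm
      _ ≤ (1 + |τ|) ^ e := Real.rpow_le_rpow (by norm_num) (by linarith) he
  · refine le_trans (min_le_right _ _) ?_
    exact Real.rpow_le_rpow_of_nonpos (by linarith) (by linarith) he.le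

lemma vertical_line_bound (σ : ℝ) (F : ℂ → ℝ) (hF : ∀ z, 0 ≤ F z)
    (hcont : ContinuousOn (fun τ : ℝ => F ((σ:ℂ) + τ * Complex.I)) (Set.Icc (-1) 1))
    (e : ℝ) (c : ℝ)
    (h1 : ∃ C, 0 < C ∧ ∀ z : ℂ, z.re = σ → 1 ≤ |z.im| →
      F z ≤ C * (1 + |z.im|) ^ e * Real.exp (c * |z.im|)) :
    ∃ C, 0 < C ∧ ∀ z : ℂ, z.re = σ →
      F z ≤ C * (1 + |z.im|) ^ e * Real.exp (c * |z.im|) := by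
  obtain ⟨C₁, hC₁, hb₁⟩ := h1
  obtain ⟨M, hM⟩ := (isCompact_Icc (a := (-1:ℝ)) (b := 1)).exists_bound_of_continuousOn hcont
  set m₀ : ℝ := min 1 (2 ^ e) with hm₀
  have hm₀pos : 0 < m₀ := lt_min one_pos (by positivity)
  set e₀ : ℝ := min (Real.exp c) 1 with he₀
  have he₀pos : 0 < e₀ := lt_min (Real.exp_pos c) one_pos
  set C₂ : ℝ := (|M| + 1) / (m₀ * e₀) with hC₂
  have hC₂pos : 0 < C₂ := by positivity
  refine ⟨C₁ + C₂, by positivity, fun z hre => ?_⟩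
  rcases le_or_gt 1 |z.im| with h | h
  · calc F z ≤ C₁ * (1 + |z.im|) ^ e * Real.exp (c * |z.im|) := hb₁ z hre h
      _ ≤ (C₁ + C₂) * (1 + |z.im|) ^ e * Real.exp (c * |z.im|) := by
          have : (0:ℝ) ≤ (1 + |z.im|) ^ e := by positivity
          nlinarith [Real.exp_pos (c * |z.im|), hC₂pos, this,
            mul_pos (mul_pos hC₂pos (lt_of_lt_of_le (by positivity) (le_refl ((1 + |z.im|) ^ e)))) (Real.exp_pos (c * |z.im|))]
  · have hz : z = (σ:ℂ) + (z.im : ℝ) * Complex.I := by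
      apply Complex.ext <;> simp [hre]
    have hmem : z.im ∈ Set.Icc (-1:ℝ) 1 := by
      constructor <;> [linarith [neg_abs_le z.im]; linarith [le_abs_self z.im]]
    have hFM : F z ≤ |M| := by
      have hb := hM z.im hmem
      rw [← hz] at hb
      rw [Real.norm_eq_abs, abs_of_nonneg (hF z)] at hb
      exact le_trans hb (le_abs_self M)
    have hexp : e₀ ≤ Real.exp (c * |z.im|) := by
      rcases le_or_gt 0 c with hc | hc
      · exact le_trans (min_le_right _ _) (Real.one_le_exp (by positivity))
      · refine le_trans (min_le_left _ _) (Real.exp_le_exp.2 ?_)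
        nlinarith [abs_nonneg z.im]
    have hpoly := poly_lower e h.le
    calc F z ≤ |M| + 1 := by linarith
      _ = C₂ * m₀ * e₀ := by rw [hC₂]; field_simp
      _ ≤ C₂ * (1 + |z.im|) ^ e * Real.exp (c * |z.im|) := by
          have h1' : C₂ * m₀ ≤ C₂ * (1 + |z.im|) ^ e :=
            mul_le_mul_of_nonneg_left hpoly hC₂pos.le
          have h2' : C₂ * m₀ * e₀ ≤ C₂ * (1 + |z.im|) ^ e * e₀ :=
            mul_le_mul_of_nonneg_right h1' he₀pos.le
          refine le_trans h2' (mul_le_mul_of_nonneg_left hexp ?_)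
          positivity
      _ ≤ (C₁ + C₂) * (1 + |z.im|) ^ e * Real.exp (c * |z.im|) := by
          have : (0:ℝ) ≤ (1 + |z.im|) ^ e := by positivity
          nlinarith [Real.exp_pos (c * |z.im|), hC₁,
            mul_pos (mul_pos hC₁ (show (0:ℝ) < (1 + |z.im|) ^ e by positivity)) (Real.exp_pos (c * |z.im|))]

lemma gammaU (σ : ℝ) (hσ : ∀ m : ℕ, σ ≠ -(m:ℝ)) :
    ∃ C, 0 < C ∧ ∀ z : ℂ, z.re = σ →
      ‖Complex.Gamma z‖ ≤
        C * (1 + |z.im|) ^ (σ - 1/2) * Real.exp (-(π/2) * |z.im|) := by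
  apply vertical_line_bound σ _ (fun z => norm_nonneg _) _ _ _ (gammaU1 σ)
  intro τ _
  apply ContinuousAt.continuousWithinAt
  have hne : ∀ m : ℕ, (σ:ℂ) + τ * Complex.I ≠ -(m:ℂ) := by
    intro m heq
    have him : τ = 0 := by
      have := congrArg Complex.im heq
      simpa using this
    have hre : σ = -(m:ℝ) := by
      have := congrArg Complex.re heq
      simpa using this
    exact hσ m hre
  have hd : DifferentiableAt ℂ Complex.Gamma ((σ:ℂ) + τ * Complex.I) :=
    Complex.differentiableAt_Gamma _ hne
  have hlin : Continuous (fun τ : ℝ => (σ:ℂ) + τ * Complex.I) :=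
    continuous_const.add (Complex.continuous_ofReal.mul continuous_const)
  have h4 : ContinuousAt (fun τ : ℝ => Complex.Gamma ((σ:ℂ) + τ * Complex.I)) τ :=
    ContinuousAt.comp (g := Complex.Gamma)
      (f := fun τ : ℝ => (σ:ℂ) + τ * Complex.I) hd.continuousAt hlin.continuousAt
  exact ContinuousAt.comp (g := norm) continuous_norm.continuousAt h4

lemma abs_sin_le (w : ℂ) : ‖Complex.sin w‖ ≤ Real.exp |w.im| := by
  rw [Complex.sin]
  rw [norm_div, norm_mul, Complex.norm_I, mul_one]
  have h1 : ‖Complex.exp (-w * Complex.I) - Complex.exp (w * Complex.I)‖ ≤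
      Real.exp w.im + Real.exp (-w.im) := by
    refine le_trans (norm_sub_le _ _) ?_
    rw [Complex.norm_exp, Complex.norm_exp]
    apply add_le_add
    · apply le_of_eq; congr 1; simp [Complex.mul_I_re]
    · apply le_of_eq; congr 1; simp [Complex.mul_I_re]
  have h2 : Real.exp w.im + Real.exp (-w.im) ≤ 2 * Real.exp |w.im| := by
    have := Real.exp_le_exp.2 (le_abs_self w.im)
    have := Real.exp_le_exp.2 (neg_le_abs w.im)
    linarith
  have habs2 : ‖(2:ℂ)‖ = 2 := by norm_num
  rw [habs2, div_le_iff₀ (by norm_num : (0:ℝ) < 2)]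
  refine le_trans (le_trans ?_ h2) (by linarith [Real.exp_pos |w.im|])
  exact h1

lemma gammaL (σ : ℝ) :
    ∃ C, 0 < C ∧ ∀ z : ℂ, z.re = σ →
      (‖Complex.Gamma z‖)⁻¹ ≤
        C * (1 + |z.im|) ^ (1/2 - σ) * Real.exp ((π/2) * |z.im|) := by
  obtain ⟨C₁, hC₁, hb₁⟩ := gammaU1 (1 - σ)
  have hmain : ∃ C, 0 < C ∧ ∀ z : ℂ, z.re = σ → 1 ≤ |z.im| →
      (‖Complex.Gamma z‖)⁻¹ ≤
        C * (1 + |z.im|) ^ (1/2 - σ) * Real.exp ((π/2) * |z.im|) := by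
    refine ⟨C₁ / π, by positivity, fun z hre him => ?_⟩
    have hzim : z.im ≠ 0 := by intro h; rw [h] at him; norm_num at him
    have hΓne : Complex.Gamma z ≠ 0 := by
      apply Complex.Gamma_ne_zero
      intro m heq
      have := congrArg Complex.im heq
      simp at this
      exact hzim this
    have hπc : (π : ℂ) ≠ 0 := by
      simp [Real.pi_ne_zero]
    have hsin : Complex.sin (π * z) ≠ 0 := by
      rw [Complex.sin_ne_zero_iff]
      intro k heq
      have := congrArg Complex.im heq
      simp at this
      exact hzim this
    have href := Complex.Gamma_mul_Gamma_one_sub z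
    have href' : Complex.Gamma z * Complex.Gamma (1-z) * Complex.sin (π*z) = π := by
      rw [href]; field_simp
    have key : (Complex.Gamma z)⁻¹ = Complex.Gamma (1 - z) * Complex.sin (π * z) / π := by
      rw [eq_div_iff hπc]
      have hinv : (Complex.Gamma z)⁻¹ * Complex.Gamma z = 1 := inv_mul_cancel₀ hΓne
      linear_combination (-(Complex.Gamma z)⁻¹) * href' +
        (Complex.Gamma (1-z) * Complex.sin ((π:ℂ) * z)) * hinv
    have habs : (‖Complex.Gamma z‖)⁻¹ =
        ‖Complex.Gamma (1 - z)‖ * ‖Complex.sin (π * z)‖ / π := by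
      rw [← norm_inv, key, norm_div, norm_mul]
      congr 1
      simp [abs_of_pos Real.pi_pos]
    have h1z : (1 - z).re = 1 - σ := by simp [hre]
    have h1zim : |(1 - z).im| = |z.im| := by simp
    have hup := hb₁ (1 - z) h1z (by rwa [h1zim])
    rw [h1zim] at hup
    have hsinb : ‖Complex.sin (π * z)‖ ≤ Real.exp (π * |z.im|) := by
      have := abs_sin_le (π * z)
      have him_eq : |(π * z : ℂ).im| = π * |z.im| := by
        simp [Complex.mul_im]
        exact Or.inl Real.pi_pos.le
      rwa [him_eq] at this
    rw [habs]
    rw [div_le_iff₀ Real.pi_pos]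
    calc ‖Complex.Gamma (1 - z)‖ * ‖Complex.sin (π * z)‖
        ≤ (C₁ * (1 + |z.im|) ^ (1 - σ - 1/2) * Real.exp (-(π/2) * |z.im|)) *
            Real.exp (π * |z.im|) := by
          apply mul_le_mul hup hsinb (norm_nonneg _) (by positivity)
      _ = C₁ / π * (1 + |z.im|) ^ (1/2 - σ) * Real.exp (π/2 * |z.im|) * π := by
          rw [show (1 - σ - 1/2 : ℝ) = 1/2 - σ by ring]
          rw [mul_assoc, ← Real.exp_add,
            show -(π/2) * |z.im| + π * |z.im| = π/2 * |z.im| by ring]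
          field_simp
  apply vertical_line_bound σ _ (fun z => by positivity) _ _ _ hmain
  have : Continuous (fun τ : ℝ => (Complex.Gamma ((σ:ℂ) + τ * Complex.I))⁻¹) :=
    Complex.differentiable_one_div_Gamma.continuous.comp
      (continuous_const.add (Complex.continuous_ofReal.mul continuous_const))
  have hc : Continuous (fun τ : ℝ => ‖(Complex.Gamma ((σ:ℂ) + τ * Complex.I))⁻¹‖) :=
    continuous_norm.comp this
  apply Continuous.continuousOn
  convert hc using 2 with τ
  rw [norm_inv]

/-- Combined bound for a ratio `|Γ(z)| / |Γ(w)|` on vertical lines. -/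
lemma pair (σ ρ : ℝ) (hσ : ∀ m : ℕ, σ ≠ -(m:ℝ)) :
    ∃ C, 0 < C ∧ ∀ z w : ℂ, z.re = σ → w.re = ρ → |w.im| = |z.im| →
      ‖Complex.Gamma z‖ * (‖Complex.Gamma w‖)⁻¹ ≤
        C * Real.sqrt (1 + (2 * z.im)^2) ^ (σ - ρ) := by
  obtain ⟨CU, hCU, hU⟩ := gammaU σ hσ
  obtain ⟨CL, hCL, hL⟩ := gammaL ρ
  refine ⟨CU * CL * 2 ^ |σ - ρ|, by positivity, fun z w hz hw him => ?_⟩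
  set v := |z.im| with hv
  have hv0 : 0 ≤ v := abs_nonneg _
  have h1 := hU z hz
  have h2 := hL w hw
  rw [him] at h2
  have step1 : ‖Complex.Gamma z‖ * (‖Complex.Gamma w‖)⁻¹ ≤
      (CU * (1 + v) ^ (σ - 1/2) * Real.exp (-(π/2) * v)) *
        (CL * (1 + v) ^ (1/2 - ρ) * Real.exp ((π/2) * v)) :=
    mul_le_mul h1 h2 (by positivity) (by positivity)
  have step2 : (CU * (1 + v) ^ (σ - 1/2) * Real.exp (-(π/2) * v)) *
      (CL * (1 + v) ^ (1/2 - ρ) * Real.exp ((π/2) * v)) =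
      CU * CL * (1 + v) ^ (σ - ρ) := by
    rw [show (σ - ρ : ℝ) = (σ - 1/2) + (1/2 - ρ) by ring, Real.rpow_add (by positivity)]
    rw [show (CU * (1 + v) ^ (σ - 1/2) * Real.exp (-(π/2) * v)) *
        (CL * (1 + v) ^ (1/2 - ρ) * Real.exp ((π/2) * v)) =
        CU * CL * ((1 + v) ^ (σ - 1/2) * (1 + v) ^ (1/2 - ρ)) *
          (Real.exp (-(π/2) * v) * Real.exp ((π/2) * v)) by ring]
    rw [← Real.exp_add]
    simp
  -- base comparison
  set S := Real.sqrt (1 + (2 * z.im)^2) with hS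
  have hS2 : S^2 = 1 + (2*z.im)^2 := Real.sq_sqrt (by positivity)
  have hSpos : 0 < S := Real.sqrt_pos.2 (by positivity)
  have hSv : S ≤ 2 * (1 + v) := by
    rw [hS]
    have : Real.sqrt (1 + (2*z.im)^2) ≤ Real.sqrt ((1 + 2*v)^2) := by
      apply Real.sqrt_le_sqrt
      have : (2*z.im)^2 = (2*v)^2 := by
        rw [hv, show (2*|z.im|) = |2*z.im| by rw [abs_mul]; norm_num, sq_abs]
      nlinarith [hv0]
    rw [Real.sqrt_sq (by positivity)] at this
    linarith
  have hvS : 1 + v ≤ 2 * S := by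
    have hs1 : 1 ≤ S := by
      rw [hS]
      have : (1:ℝ) = Real.sqrt 1 := by simp
      rw [this]
      exact Real.sqrt_le_sqrt (by nlinarith [sq_nonneg (2*z.im)])
    have hs2 : v ≤ S := by
      have h4 : v^2 ≤ S^2 := by
        rw [hS2, hv, show |z.im|^2 = z.im^2 by rw [sq_abs]]
        nlinarith [sq_nonneg z.im]
      nlinarith [hSpos, hv0]
    linarith
  have hcomp : (1 + v) ^ (σ - ρ) ≤ 2 ^ |σ - ρ| * S ^ (σ - ρ) :=
    rpow_comp (by positivity) hSpos hvS hSv (σ - ρ)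
  calc ‖Complex.Gamma z‖ * (‖Complex.Gamma w‖)⁻¹
      ≤ CU * CL * (1 + v) ^ (σ - ρ) := by rw [← step2]; exact step1
    _ ≤ CU * CL * (2 ^ |σ - ρ| * S ^ (σ - ρ)) :=
        mul_le_mul_of_nonneg_left hcomp (by positivity)
    _ = CU * CL * 2 ^ |σ - ρ| * S ^ (σ - ρ) := by ring

lemma half_re (w : ℂ) : (w/2).re = w.re/2 := by simp [Complex.div_re]
lemma half_im (w : ℂ) : (w/2).im = w.im/2 := by simp [Complex.div_im]

lemma sqrtT (τ : ℝ) :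
    ‖1 + Complex.I * ((τ : ℝ) : ℂ)‖ = Real.sqrt (1 + τ^2) := by
  rw [show (1 + Complex.I * ((τ:ℝ):ℂ)) = ((1:ℝ):ℂ) + (τ:ℝ) * Complex.I by push_cast; ring,
    Complex.norm_add_mul_I]
  norm_num

lemma MdivL {x y z : ℝ} (hx : 0 < x) (hy : 0 < y) (hz : 0 < z) (p q r p' q' r' : ℝ) :
    (x^p * y^q * z^r) / (x^p' * y^q' * z^r') = x^(p-p') * y^(q-q') * z^(r-r') := by
  rw [Real.rpow_sub hx, Real.rpow_sub hy, Real.rpow_sub hz]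
  field_simp


end statement12aux

/-- Bound for `G*_b(μ)` on a vertical plane `Re(μ) = η`. -/
theorem statement12 (η₁ η₂ : ℝ)
    (h1 : ∀ n : ℤ, n ≤ 0 → (η₁ - η₂) / 2 ≠ (n : ℝ))
    (h2 : ∀ n : ℤ, n ≤ 0 → (η₁ - (-η₁ - η₂)) / 2 ≠ (n : ℝ))
    (h3 : ∀ n : ℤ, n ≤ 0 → ((-η₁ - η₂) - η₂) / 2 ≠ (n : ℝ)) :
    ∃ C : ℝ, ∀ μ₁ μ₂ : ℂ, μ₁.re = η₁ → μ₂.re = η₂ →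
      ‖Gb μ₁ μ₂ (-μ₁ - μ₂)‖ ≤
        C * Mpoly (((μ₁ - μ₂).re - 1) / 2) (((μ₁ - (-μ₁ - μ₂)).re - 1) / 2)
              ((((-μ₁ - μ₂) - μ₂).re - 1) / 2) μ₁ μ₂ (-μ₁ - μ₂) /
            Lpoly μ₁ μ₂ (-μ₁ - μ₂) := by
  have hcast : ∀ (σ : ℝ), (∀ n : ℤ, n ≤ 0 → σ ≠ (n : ℝ)) → ∀ m : ℕ, σ ≠ -(m:ℝ) := by
    intro σ hh m hc
    exact hh (-(m:ℤ)) (by omega) (by push_cast; linarith [hc.ge, hc.le])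
  obtain ⟨C₁, hC₁, hP1⟩ := pair ((η₁ - η₂)/2) ((η₁ - η₂)/2 + 1/2) (hcast _ h1)
  obtain ⟨C₂, hC₂, hP2⟩ := pair ((η₁ - (-η₁ - η₂))/2) ((η₁ - (-η₁ - η₂))/2 + 1/2) (hcast _ h2)
  obtain ⟨C₃, hC₃, hP3⟩ := pair (((-η₁ - η₂) - η₂)/2) (1/2 - ((-η₁ - η₂) - η₂)/2) (hcast _ h3)
  refine ⟨4 * π ^ (3/2 + 2*η₁ + η₂) * (C₁ * C₂ * C₃), ?_⟩
  intro μ₁ μ₂ hμ1 hμ2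
  set μ₃ : ℂ := -μ₁ - μ₂ with hμ3
  -- real parts
  have hre12 : (μ₁ - μ₂).re = η₁ - η₂ := by simp [hμ1, hμ2]
  have hre13 : (μ₁ - μ₃).re = η₁ - (-η₁ - η₂) := by
    simp [hμ3, hμ1, hμ2]
  have hre32 : (μ₃ - μ₂).re = (-η₁ - η₂) - η₂ := by
    simp [hμ3, hμ1, hμ2]
  have hre23 : (μ₂ - μ₃).re = -(((-η₁ - η₂) - η₂)) := by
    simp [hμ3, hμ1, hμ2]
  -- abbreviations for the six Gamma arguments
  set a1 : ℂ := (μ₁ - μ₂)/2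
  set a2 : ℂ := (μ₁ - μ₃)/2
  set a3 : ℂ := (μ₃ - μ₂)/2
  set b1 : ℂ := (1 + μ₁ - μ₂)/2
  set b2 : ℂ := (1 + μ₁ - μ₃)/2
  set b3 : ℂ := (1 + μ₂ - μ₃)/2
  -- their re/im data
  have ha1re : a1.re = (η₁ - η₂)/2 := by rw [half_re, hre12]
  have ha2re : a2.re = (η₁ - (-η₁ - η₂))/2 := by rw [half_re, hre13]
  have ha3re : a3.re = ((-η₁ - η₂) - η₂)/2 := by rw [half_re, hre32]
  have hb1re : b1.re = (η₁ - η₂)/2 + 1/2 := by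
    rw [half_re, show ((1:ℂ) + μ₁ - μ₂).re = 1 + (μ₁ - μ₂).re by simp; ring, hre12]; ring
  have hb2re : b2.re = (η₁ - (-η₁ - η₂))/2 + 1/2 := by
    rw [half_re, show ((1:ℂ) + μ₁ - μ₃).re = 1 + (μ₁ - μ₃).re by simp; ring, hre13]; ring
  have hb3re : b3.re = 1/2 - ((-η₁ - η₂) - η₂)/2 := by
    rw [half_re, show ((1:ℂ) + μ₂ - μ₃).re = 1 + (μ₂ - μ₃).re by simp; ring, hre23]; ring
  have hb1im : |b1.im| = |a1.im| := by
    rw [half_im, half_im, show ((1:ℂ) + μ₁ - μ₂).im = (μ₁ - μ₂).im by simp]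
  have hb2im : |b2.im| = |a2.im| := by
    rw [half_im, half_im, show ((1:ℂ) + μ₁ - μ₃).im = (μ₁ - μ₃).im by simp]
  have hb3im : |b3.im| = |a3.im| := by
    rw [half_im, half_im, show ((1:ℂ) + μ₂ - μ₃).im = (μ₂ - μ₃).im by simp,
      show (μ₂ - μ₃).im = -((μ₃ - μ₂).im) by simp]
    rw [show -(μ₃ - μ₂).im / 2 = -((μ₃ - μ₂).im / 2) by ring, abs_neg]
  -- pair bounds
  have hB1 := hP1 a1 b1 ha1re hb1re hb1im
  have hB2 := hP2 a2 b2 ha2re hb2re hb2im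
  have hB3 := hP3 a3 b3 ha3re hb3re hb3im
  -- bases
  have hbase1 : Real.sqrt (1 + (2 * a1.im)^2) =
      ‖1 + Complex.I * (((μ₁ - μ₂).im : ℝ) : ℂ)‖ := by
    rw [sqrtT, half_im]; congr 1; ring
  have hbase2 : Real.sqrt (1 + (2 * a2.im)^2) =
      ‖1 + Complex.I * (((μ₁ - μ₃).im : ℝ) : ℂ)‖ := by
    rw [sqrtT, half_im]; congr 1; ring
  have hbase3 : Real.sqrt (1 + (2 * a3.im)^2) =
      ‖1 + Complex.I * (((μ₂ - μ₃).im : ℝ) : ℂ)‖ := by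
    rw [sqrtT, half_im]
    congr 1
    simp [Complex.sub_im]
    ring
  set T1 : ℝ := ‖1 + Complex.I * (((μ₁ - μ₂).im : ℝ) : ℂ)‖ with hT1
  set T2 : ℝ := ‖1 + Complex.I * (((μ₁ - μ₃).im : ℝ) : ℂ)‖ with hT2
  set T3 : ℝ := ‖1 + Complex.I * (((μ₂ - μ₃).im : ℝ) : ℂ)‖ with hT3
  have hT1pos : 0 < T1 := by
    rw [hT1, sqrtT]; exact Real.sqrt_pos.2 (by positivity)
  have hT2pos : 0 < T2 := by
    rw [hT2, sqrtT]; exact Real.sqrt_pos.2 (by positivity)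
  have hT3pos : 0 < T3 := by
    rw [hT3, sqrtT]; exact Real.sqrt_pos.2 (by positivity)
  rw [hbase1, show (η₁ - η₂)/2 - ((η₁ - η₂)/2 + 1/2) = -(1/2) by ring] at hB1
  rw [hbase2, show (η₁ - (-η₁ - η₂))/2 - ((η₁ - (-η₁ - η₂))/2 + 1/2) = -(1/2) by ring] at hB2
  rw [hbase3, show ((-η₁ - η₂) - η₂)/2 - (1/2 - ((-η₁ - η₂) - η₂)/2)
      = -η₁ - 2*η₂ - 1/2 by ring] at hB3
  -- decompose |Gb'|
  have hGb : ‖Gb μ₁ μ₂ μ₃‖ =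
      4 * π ^ (3/2 + 2*η₁ + η₂) *
        ((‖Complex.Gamma a1‖ * (‖Complex.Gamma b1‖)⁻¹) *
         (‖Complex.Gamma a2‖ * (‖Complex.Gamma b2‖)⁻¹) *
         (‖Complex.Gamma a3‖ * (‖Complex.Gamma b3‖)⁻¹)) := by
    rw [Gb]
    rw [norm_div, norm_mul, norm_mul, norm_mul, norm_mul, norm_mul, norm_mul]
    have h4 : ‖(4:ℂ)‖ = 4 := by norm_num
    have hπ : ‖(Real.pi : ℂ) ^ ((3 : ℂ) / 2 + μ₁ - μ₃)‖ =
        π ^ (3/2 + 2*η₁ + η₂) := by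
      rw [Complex.norm_cpow_eq_rpow_re_of_pos Real.pi_pos]
      congr 1
      simp [hμ3, hμ1, hμ2, Complex.div_re]
      ring
    rw [h4, hπ, div_eq_mul_inv, mul_inv, mul_inv]
    ring
  rw [hGb]
  -- RHS rearrangement
  have hRHS : Mpoly (((μ₁ - μ₂).re - 1) / 2) (((μ₁ - μ₃).re - 1) / 2)
        (((μ₃ - μ₂).re - 1) / 2) μ₁ μ₂ μ₃ / Lpoly μ₁ μ₂ μ₃ =
      T1 ^ (-(1/2) : ℝ) * T2 ^ (-(1/2) : ℝ) * T3 ^ (-η₁ - 2*η₂ - 1/2) := by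
    rw [Lpoly, Mpoly, Mpoly]
    rw [hre12, hre13, hre32, hre23]
    rw [MdivL hT1pos hT2pos hT3pos]
    rw [show (η₁ - η₂ - 1)/2 - (η₁ - η₂)/2 = -(1/2) by ring]
    rw [show (η₁ - (-η₁ - η₂) - 1)/2 - (η₁ - (-η₁ - η₂))/2 = -(1/2) by ring]
    rw [show (-η₁ - η₂ - η₂ - 1)/2 - (-(-η₁ - η₂ - η₂))/2 = -η₁ - 2*η₂ - 1/2 by ring]
  rw [mul_div_assoc, hRHS]
  rw [show 4 * π ^ (3/2 + 2*η₁ + η₂) * (C₁ * C₂ * C₃) *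
      (T1 ^ (-(1/2) : ℝ) * T2 ^ (-(1/2) : ℝ) * T3 ^ (-η₁ - 2*η₂ - 1/2)) =
      4 * π ^ (3/2 + 2*η₁ + η₂) *
      ((C₁ * T1 ^ (-(1/2) : ℝ)) * (C₂ * T2 ^ (-(1/2) : ℝ)) *
       (C₃ * T3 ^ (-η₁ - 2*η₂ - 1/2))) by ring]
  apply mul_le_mul_of_nonneg_left _ (by positivity)
  have m2 : (0:ℝ) ≤ ‖Complex.Gamma a2‖ * (‖Complex.Gamma b2‖)⁻¹ := by
    positivity
  have m3 : (0:ℝ) ≤ ‖Complex.Gamma a3‖ * (‖Complex.Gamma b3‖)⁻¹ := by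
    positivity
  have q1 : (0:ℝ) ≤ C₁ * T1 ^ (-(1/2) : ℝ) := by positivity
  have q2 : (0:ℝ) ≤ C₂ * T2 ^ (-(1/2) : ℝ) := by positivity
  exact mul_le_mul (mul_le_mul hB1 hB2 m2 q1) hB3 m3 (mul_nonneg q1 q2)
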